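/- arXiv:2201.05783 — 5 statements merged into one kernel-verified Lean document; each statement's English description precedes it below -/
import Mathlib

section
/- For every graph G, the strict bramble number of G is at most the bramble number of G, and the bramble number of G is at most twice the strict bramble number of G. -/
open SimpleGraph

section Defs

variable {V W : Type}

/-- `X` covers the family `B`: every member of `B` meets `X`. -/
def Covers (X : Set V) (B : Set (Set V)) : Prop := ∀ S ∈ B, (S ∩ X).Nonempty

/-- A strict bramble: a family of connected vertex sets, pairwise intersecting. -/
def IsStrictBramble (G : SimpleGraph V) (B : Set (Set V)) : Prop :=
  (∀ S ∈ B, (G.induce S).Connected) ∧ ∀ S ∈ B, ∀ S' ∈ B, (S ∩ S').Nonempty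

/-- Two vertex sets touch: they intersect or are joined by an edge. -/
def Touches (G : SimpleGraph V) (S S' : Set V) : Prop :=
  (S ∩ S').Nonempty ∨ ∃ u ∈ S, ∃ v ∈ S', G.Adj u v

/-- A bramble: a family of connected vertex sets, pairwise touching. -/
def IsBramble (G : SimpleGraph V) (B : Set (Set V)) : Prop :=
  (∀ S ∈ B, (G.induce S).Connected) ∧ ∀ S ∈ B, ∀ S' ∈ B, Touches G S S'

/-- The order of a family of vertex sets: minimum size of a covering set. -/
noncomputable def brOrder (B : Set (Set V)) : ℕ :=
  sInf {n | ∃ X : Set V, Covers X B ∧ X.ncard = n}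

/-- The strict bramble number. -/
noncomputable def sbn (G : SimpleGraph V) : ℕ :=
  sSup {n | ∃ B, IsStrictBramble G B ∧ brOrder B = n}

/-- The bramble number. -/
noncomputable def bn (G : SimpleGraph V) : ℕ :=
  sSup {n | ∃ B, IsBramble G B ∧ brOrder B = n}

/-- `S` is an `(x,y)`-separator: `x, y ∉ S` and `x, y` lie in different
components of `G − S`. -/
def SepPair (G : SimpleGraph V) (x y : V) (S : Set V) : Prop :=
  x ∉ S ∧ y ∉ S ∧ ∀ (hx : x ∈ Sᶜ) (hy : y ∈ Sᶜ),
    ¬ (G.induce Sᶜ).Reachable ⟨x, hx⟩ ⟨y, hy⟩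

/-- `S` is an `(X,Y)`-separator of `G`. -/
def IsSetSeparator (G : SimpleGraph V) (X Y S : Set V) : Prop :=
  ∀ x ∈ X \ S, ∀ y ∈ Y \ S, SepPair G x y S

/-- A lenient tree decomposition of `G`. -/
structure LenientTD (G : SimpleGraph V) where
  ι : Type
  T : SimpleGraph ι
  tree : T.IsTree
  χ : ι → Set V
  covers : ∀ v : V, ∃ t, v ∈ χ t
  edge_mem : ∀ u v : V, G.Adj u v →
    ∃ t t', (t = t' ∨ T.Adj t t') ∧ u ∈ χ t ∪ χ t' ∧ v ∈ χ t ∪ χ t'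
  trace_conn : ∀ v : V, (T.induce {t | v ∈ χ t}).Connected

/-- The width of a lenient tree decomposition is at most `k`. -/
def LenientTD.WidthLE {G : SimpleGraph V} (D : LenientTD G) (k : ℕ) : Prop :=
  ∀ t, (D.χ t).ncard ≤ k

/-- An ordinary tree decomposition of `G`. -/
structure TreeDecomp (G : SimpleGraph V) where
  ι : Type
  T : SimpleGraph ι
  tree : T.IsTree
  χ : ι → Set V
  covers : ∀ v : V, ∃ t, v ∈ χ t
  edge_mem : ∀ u v : V, G.Adj u v → ∃ t, u ∈ χ t ∧ v ∈ χ t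
  trace_conn : ∀ v : V, (T.induce {t | v ∈ χ t}).Connected

/-- Treewidth: minimum over tree decompositions of (max bag size − 1). -/
noncomputable def tw (G : SimpleGraph V) : ℕ :=
  sInf {k | ∃ D : TreeDecomp G, ∀ t, (D.χ t).ncard ≤ k + 1}

/-- A minor model of `H` in `G`. -/
def IsMinorModel (H : SimpleGraph W) (G : SimpleGraph V) (μ : W → Set V) : Prop :=
  (∀ w, (G.induce (μ w)).Connected) ∧
  (∀ w w', w ≠ w' → μ w ∩ μ w' = ∅) ∧
  (∀ w w', H.Adj w w' → ∃ u ∈ μ w, ∃ v ∈ μ w', G.Adj u v)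

/-- `H` is a minor of `G`. -/
def IsMinorOf (H : SimpleGraph W) (G : SimpleGraph V) : Prop :=
  ∃ μ : W → Set V, IsMinorModel H G μ

/-- The lexicographic product `T · K_k`. -/
def lexK {ι : Type} (T : SimpleGraph ι) (k : ℕ) : SimpleGraph (ι × Fin k) where
  Adj a b := T.Adj a.1 b.1 ∨ (a.1 = b.1 ∧ a.2 ≠ b.2)
  symm := by
    constructor
    rintro a b (h | ⟨h1, h2⟩)
    · exact Or.inl h.symm
    · exact Or.inr ⟨h1.symm, h2.symm⟩
  loopless := by
    constructor
    rintro a (h | ⟨_, h2⟩)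
    · exact T.loopless.irrefl _ h
    · exact h2 rfl

/-- The lexicographic tree product number. -/
noncomputable def ltp (G : SimpleGraph V) : ℕ :=
  sInf {m | ∃ (ι : Type) (T : SimpleGraph ι), T.IsTree ∧ IsMinorOf G (lexK T m)}

/-- The `(T,χ)`-completion of `G`: make each union of two close bags a clique. -/
def LenientTD.completion {G : SimpleGraph V} (D : LenientTD G) : SimpleGraph V where
  Adj u v := u ≠ v ∧ ∃ t t', (t = t' ∨ D.T.Adj t t') ∧
    u ∈ D.χ t ∪ D.χ t' ∧ v ∈ D.χ t ∪ D.χ t'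
  symm := by
    constructor
    rintro u v ⟨hne, t, t', hc, hu, hv⟩
    exact ⟨hne.symm, t, t', hc, hv, hu⟩
  loopless := ⟨fun u h => h.1 rfl⟩

/-- `G` is chordal: every cycle of length at least four has a chord. -/
def IsChordal (G : SimpleGraph V) : Prop :=
  ∀ (v : V) (w : G.Walk v v), w.IsCycle → 4 ≤ w.length →
    ∃ x ∈ w.support, ∃ y ∈ w.support, G.Adj x y ∧ s(x, y) ∉ w.edges

end Defs

section Aux

variable {V : Type} {G : SimpleGraph V}

lemma my_subset_compl {S X : Set V} (h : S ∩ X = ∅) : S ⊆ Xᶜ :=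
  fun v hv hx => Set.eq_empty_iff_forall_notMem.mp h v ⟨hv, hx⟩

lemma my_nonempty_of_connected {S : Set V} (h : (G.induce S).Connected) : S.Nonempty := by
  obtain ⟨⟨x, hx⟩⟩ := h.nonempty
  exact ⟨x, hx⟩

lemma reachable_induce_mono {A B : Set V} (h : A ⊆ B) {u v : V} (hu : u ∈ A) (hv : v ∈ A)
    (hr : (G.induce A).Reachable ⟨u, hu⟩ ⟨v, hv⟩) :
    (G.induce B).Reachable ⟨u, h hu⟩ ⟨v, h hv⟩ := by
  let φ : G.induce A →g G.induce B := ⟨fun x => ⟨x.1, h x.2⟩, fun {a b} hab => hab⟩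
  exact hr.map φ

lemma touch_reachable {C S S' : Set V} (hS : (G.induce S).Connected)
    (hS' : (G.induce S').Connected) (hSC : S ⊆ C) (hS'C : S' ⊆ C) (ht : Touches G S S')
    {s s' : V} (hs : s ∈ S) (hs' : s' ∈ S') :
    (G.induce C).Reachable ⟨s, hSC hs⟩ ⟨s', hS'C hs'⟩ := by
  rcases ht with ⟨w, hw1, hw2⟩ | ⟨u, hu, v, hv, huv⟩
  · exact (reachable_induce_mono hSC hs hw1 (hS.preconnected ⟨s, hs⟩ ⟨w, hw1⟩)).trans
      (reachable_induce_mono hS'C hw2 hs' (hS'.preconnected ⟨w, hw2⟩ ⟨s', hs'⟩))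
  · have hadj : (G.induce C).Adj ⟨u, hSC hu⟩ ⟨v, hS'C hv⟩ := huv
    exact ((reachable_induce_mono hSC hs hu (hS.preconnected ⟨s, hs⟩ ⟨u, hu⟩)).trans
      hadj.reachable).trans
      (reachable_induce_mono hS'C hv hs' (hS'.preconnected ⟨v, hv⟩ ⟨s', hs'⟩))

/-- The set of vertices of `G − X` reachable from `S` (inside `G − X`). -/
def reachSet (G : SimpleGraph V) (X S : Set V) : Set V :=
  {v | ∃ (hv : v ∈ Xᶜ) (s : V) (_ : s ∈ S) (hs : s ∈ Xᶜ),
    (G.induce Xᶜ).Reachable ⟨s, hs⟩ ⟨v, hv⟩}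

lemma reachSet_subset_compl {X S : Set V} : reachSet G X S ⊆ Xᶜ :=
  fun _ hv => hv.1

lemma subset_reachSet {X S : Set V} (hd : S ∩ X = ∅) : S ⊆ reachSet G X S :=
  fun v hv => ⟨my_subset_compl hd hv, v, hv, my_subset_compl hd hv, .rfl⟩

lemma mem_reachSet_of_touch {X S S' : Set V} (hS : (G.induce S).Connected)
    (hS' : (G.induce S').Connected) (hd : S ∩ X = ∅) (hd' : S' ∩ X = ∅)
    (ht : Touches G S S') {v : V} (hv : v ∈ S') : v ∈ reachSet G X S := by
  obtain ⟨s, hs⟩ := my_nonempty_of_connected hS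
  exact ⟨my_subset_compl hd' hv, s, hs, my_subset_compl hd hs,
    touch_reachable hS hS' (my_subset_compl hd) (my_subset_compl hd') ht hs hv⟩

lemma walk_in_reachSet {X S : Set V} :
    ∀ {a b : ↥(Xᶜ)} (_ : (G.induce Xᶜ).Walk a b) (ha : a.1 ∈ reachSet G X S),
      ∃ hb : b.1 ∈ reachSet G X S,
        (G.induce (reachSet G X S)).Reachable ⟨a.1, ha⟩ ⟨b.1, hb⟩ := by
  intro a b p
  induction p with
  | nil => exact fun ha => ⟨ha, .rfl⟩
  | @cons u c b h p ih =>
    intro ha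
    have ha' := ha
    obtain ⟨hvX, s, hsS, hsX, hr⟩ := ha'
    have hc : c.1 ∈ reachSet G X S := ⟨c.2, s, hsS, hsX, hr.trans h.reachable⟩
    obtain ⟨hb, hr2⟩ := ih hc
    have hadj : (G.induce (reachSet G X S)).Adj ⟨u.1, ha⟩ ⟨c.1, hc⟩ := h
    exact ⟨hb, hadj.reachable.trans hr2⟩

lemma reachSet_connected {X S : Set V} (hS : (G.induce S).Connected) (hd : S ∩ X = ∅) :
    (G.induce (reachSet G X S)).Connected := by
  obtain ⟨s₀, hs₀⟩ := my_nonempty_of_connected hS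
  have hs₀R : s₀ ∈ reachSet G X S := subset_reachSet hd hs₀
  have key : ∀ x : ↥(reachSet G X S),
      (G.induce (reachSet G X S)).Reachable ⟨s₀, hs₀R⟩ x := by
    rintro ⟨v, hv⟩
    have hv' := hv
    obtain ⟨hvX, s, hsS, hsX, hr⟩ := hv'
    have h0s : (G.induce Xᶜ).Reachable ⟨s₀, my_subset_compl hd hs₀⟩ ⟨s, hsX⟩ :=
      reachable_induce_mono (my_subset_compl hd) hs₀ hsS (hS.preconnected ⟨s₀, hs₀⟩ ⟨s, hsS⟩)
    obtain ⟨p⟩ := h0s.trans hr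
    obtain ⟨hb, hrr⟩ := walk_in_reachSet p hs₀R
    exact hrr
  rw [SimpleGraph.connected_iff]
  exact ⟨fun x y => (key x).symm.trans (key y), ⟨⟨s₀, hs₀R⟩⟩⟩

lemma exists_avoid {B : Set (Set V)} {Y : Set V} (h : Y.ncard < brOrder B) :
    ∃ S ∈ B, S ∩ Y = ∅ := by
  by_contra hc
  push_neg at hc
  have hcov : Covers Y B := fun S hS => hc S hS
  have h2 : brOrder B ≤ Y.ncard := Nat.sInf_le ⟨Y, hcov, rfl⟩
  omega

lemma brOrder_le_card [Fintype V] {B : Set (Set V)} (hne : ∀ S ∈ B, S.Nonempty) :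
    brOrder B ≤ Fintype.card V := by
  have hcov : Covers Set.univ B := fun S hS => by
    simpa [Set.inter_univ] using hne S hS
  have h2 : brOrder B ≤ (Set.univ : Set V).ncard := Nat.sInf_le ⟨Set.univ, hcov, rfl⟩
  simpa [Set.ncard_univ, Nat.card_eq_fintype_card] using h2

end Aux

/-- For every graph `G`, `sbn G ≤ bn G ≤ 2 · sbn G`. -/
theorem sbn_le_bn_le_two_mul_sbn {V : Type} [Fintype V] (G : SimpleGraph V) :
    sbn G ≤ bn G ∧ bn G ≤ 2 * sbn G := by
  have hord0 : brOrder (∅ : Set (Set V)) = 0 := by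
    have h1 : brOrder (∅ : Set (Set V)) ≤ (∅ : Set V).ncard :=
      Nat.sInf_le ⟨∅, fun S hS => absurd hS (Set.notMem_empty S), rfl⟩
    simpa using h1
  have h0b : (0:ℕ) ∈ {n | ∃ B, IsBramble G B ∧ brOrder B = n} :=
    ⟨∅, ⟨fun S hS => absurd hS (Set.notMem_empty S),
         fun S hS => absurd hS (Set.notMem_empty S)⟩, hord0⟩
  have h0s : (0:ℕ) ∈ {n | ∃ B, IsStrictBramble G B ∧ brOrder B = n} :=
    ⟨∅, ⟨fun S hS => absurd hS (Set.notMem_empty S),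
         fun S hS => absurd hS (Set.notMem_empty S)⟩, hord0⟩
  have hbddb : BddAbove {n | ∃ B, IsBramble G B ∧ brOrder B = n} := by
    refine ⟨Fintype.card V, ?_⟩
    rintro n ⟨B, hB, rfl⟩
    exact brOrder_le_card (fun S hS => my_nonempty_of_connected (hB.1 S hS))
  have hbdds : BddAbove {n | ∃ B, IsStrictBramble G B ∧ brOrder B = n} := by
    refine ⟨Fintype.card V, ?_⟩
    rintro n ⟨B, hB, rfl⟩
    exact brOrder_le_card (fun S hS => my_nonempty_of_connected (hB.1 S hS))
  constructor
  · apply csSup_le_csSup hbddb ⟨0, h0s⟩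
    rintro n ⟨B, ⟨h1, h2⟩, rfl⟩
    exact ⟨B, ⟨h1, fun S hS S' hS' => Or.inl (h2 S hS S' hS')⟩, rfl⟩
  · apply csSup_le ⟨0, h0b⟩
    rintro n ⟨B, hB, rfl⟩
    set k := brOrder B with hk
    rcases Nat.eq_zero_or_pos k with h0 | hpos
    · omega
    set t := (k+1)/2 with htdef
    set Bram : Set (Set V) := {C | ∃ X Sb : Set V, X.ncard < t ∧ Sb ∈ B ∧ Sb ∩ X = ∅ ∧
      C = reachSet G X Sb} with hBramdef
    have hstrict : IsStrictBramble G Bram := by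
      constructor
      · rintro C ⟨X, Sb, hX, hSb, hd, rfl⟩
        exact reachSet_connected (hB.1 Sb hSb) hd
      · rintro C₁ ⟨X₁, S₁, hX₁, hS₁, hd₁, rfl⟩ C₂ ⟨X₂, S₂, hX₂, hS₂, hd₂, rfl⟩
        have hcard : (X₁ ∪ X₂).ncard < k := by
          have := Set.ncard_union_le X₁ X₂
          omega
        obtain ⟨S₃, hS₃, hd₃⟩ := exists_avoid hcard
        obtain ⟨v, hv⟩ := my_nonempty_of_connected (hB.1 S₃ hS₃)
        have hd31 : S₃ ∩ X₁ = ∅ := by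
          apply Set.eq_empty_iff_forall_notMem.mpr
          intro x hx
          exact Set.eq_empty_iff_forall_notMem.mp hd₃ x ⟨hx.1, Or.inl hx.2⟩
        have hd32 : S₃ ∩ X₂ = ∅ := by
          apply Set.eq_empty_iff_forall_notMem.mpr
          intro x hx
          exact Set.eq_empty_iff_forall_notMem.mp hd₃ x ⟨hx.1, Or.inr hx.2⟩
        exact ⟨v, mem_reachSet_of_touch (hB.1 S₁ hS₁) (hB.1 S₃ hS₃) hd₁ hd31
          (hB.2 S₁ hS₁ S₃ hS₃) hv,
          mem_reachSet_of_touch (hB.1 S₂ hS₂) (hB.1 S₃ hS₃) hd₂ hd32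
          (hB.2 S₂ hS₂ S₃ hS₃) hv⟩
    have hts : t ≤ sbn G := by
      have hord : t ≤ brOrder Bram := by
        apply le_csInf
        · refine ⟨(Set.univ : Set V).ncard, Set.univ, ?_, rfl⟩
          rintro C ⟨X, Sb, hX, hSb, hd, rfl⟩
          obtain ⟨s, hs⟩ := my_nonempty_of_connected (hB.1 Sb hSb)
          exact ⟨s, subset_reachSet hd hs, Set.mem_univ s⟩
        · rintro m ⟨Y, hYcov, rfl⟩
          by_contra hlt
          push_neg at hlt
          obtain ⟨S, hS, hd⟩ := exists_avoid (B := B) (show Y.ncard < k by omega)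
          obtain ⟨w, hw1, hw2⟩ := hYcov (reachSet G Y S) ⟨Y, S, hlt, hS, hd, rfl⟩
          exact reachSet_subset_compl hw1 hw2
      calc t ≤ brOrder Bram := hord
        _ ≤ sbn G := le_csSup hbdds ⟨Bram, hstrict, rfl⟩
    omega
end

section
/- Let G be a graph, B a strict bramble of G, X and Y vertex sets that each cover B, and S an (X,Y)-separator of G. Then S covers B. -/
open SimpleGraph

/-- an `(X,Y)`-separator covers any strict bramble covered by both
`X` and `Y`. -/
theorem separator_covers {V : Type} [Fintype V] (G : SimpleGraph V)
    (B : Set (Set V)) (hB : IsStrictBramble G B) (X Y S : Set V)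
    (hX : Covers X B) (hY : Covers Y B) (hS : IsSetSeparator G X Y S) :
    Covers S B := by
  intro C hC
  by_contra h
  rw [Set.not_nonempty_iff_eq_empty] at h
  obtain ⟨x, hxC, hxX⟩ := hX C hC
  obtain ⟨y, hyC, hyY⟩ := hY C hC
  have hCS : C ⊆ Sᶜ := fun v hv hvS =>
    Set.eq_empty_iff_forall_notMem.mp h v ⟨hv, hvS⟩
  have hr : (G.induce C).Reachable ⟨x, hxC⟩ ⟨y, hyC⟩ := (hB.1 C hC) ⟨x, hxC⟩ ⟨y, hyC⟩
  exact (hS x ⟨hxX, hCS hxC⟩ y ⟨hyY, hCS hyC⟩).2.2 (hCS hxC) (hCS hyC)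
    (hr.map (G.induceHomOfLE hCS).toHom)
end

section
/- Let (T,χ) be a lenient tree decomposition of a graph G, and let t be a node of T such that there exist distinct vertices x, y of G whose traces Trace(x) = {s : x ∈ χ(s)} and Trace(y) lie in different components of T − t. Then χ(t) is an (x,y)-separator of G. -/
open SimpleGraph

/-- Trace connectivity transfers to `T − t`. -/
lemma trace_reach {V : Type} {G : SimpleGraph V} (D : LenientTD G) (t : D.ι)
    {u : V} (hut : u ∉ D.χ t) {s s' : D.ι} (hs : u ∈ D.χ s) (hs' : u ∈ D.χ s') :
    (D.T.induce ({t}ᶜ : Set D.ι)).Reachable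
      ⟨s, fun h => hut (h ▸ hs)⟩ ⟨s', fun h => hut (h ▸ hs')⟩ := by
  have hconn := D.trace_conn u
  have hr : (D.T.induce {a | u ∈ D.χ a}).Reachable ⟨s, hs⟩ ⟨s', hs'⟩ := hconn ⟨s, hs⟩ ⟨s', hs'⟩
  let F : D.T.induce {a | u ∈ D.χ a} →g D.T.induce ({t}ᶜ : Set D.ι) :=
    { toFun := fun a => ⟨a.1, fun h => hut (h ▸ a.2)⟩
      map_rel' := fun h => h }
  exact hr.map F

lemma close_reach {V : Type} {G : SimpleGraph V} (D : LenientTD G) (t : D.ι)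
    {a b : D.ι} (ha : a ≠ t) (hb : b ≠ t) (h : a = b ∨ D.T.Adj a b) :
    (D.T.induce ({t}ᶜ : Set D.ι)).Reachable ⟨a, ha⟩ ⟨b, hb⟩ := by
  rcases h with rfl | h
  · rfl
  · exact (SimpleGraph.Adj.reachable (by exact h : (D.T.induce ({t}ᶜ : Set D.ι)).Adj ⟨a, ha⟩ ⟨b, hb⟩))

/-- An edge of `G − χ t` connects traces in `T − t`. -/
lemma edge_reach {V : Type} {G : SimpleGraph V} (D : LenientTD G) (t : D.ι)
    {u v : V} (hut : u ∉ D.χ t) (hvt : v ∉ D.χ t) (huv : G.Adj u v)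
    {s s' : D.ι} (hs : u ∈ D.χ s) (hs' : v ∈ D.χ s') :
    (D.T.induce ({t}ᶜ : Set D.ι)).Reachable
      ⟨s, fun h => hut (h ▸ hs)⟩ ⟨s', fun h => hvt (h ▸ hs')⟩ := by
  obtain ⟨t1, t2, hc, hu, hv⟩ := D.edge_mem u v huv
  have key : ∀ (a b : D.ι) (hua : u ∈ D.χ a) (hvb : v ∈ D.χ b),
      (a = b ∨ D.T.Adj a b) →
      (D.T.induce ({t}ᶜ : Set D.ι)).Reachable
        ⟨s, fun h => hut (h ▸ hs)⟩ ⟨s', fun h => hvt (h ▸ hs')⟩ := by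
    intro a b hua hvb hab
    have ha : a ≠ t := fun h => hut (h ▸ hua)
    have hb : b ≠ t := fun h => hvt (h ▸ hvb)
    exact (trace_reach D t hut hs hua).trans
      ((close_reach D t ha hb hab).trans (trace_reach D t hvt hvb hs'))
  rcases hu with hu | hu <;> rcases hv with hv | hv
  · exact key t1 t1 hu hv (Or.inl rfl)
  · exact key t1 t2 hu hv hc
  · exact key t2 t1 hu hv (by rcases hc with h | h; exact Or.inl h.symm; exact Or.inr h.symm)
  · exact key t2 t2 hu hv (Or.inl rfl)

/-- if the traces of distinct vertices `x`, `y` lie in different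
components of `T − t`, then `χ t` is an `(x,y)`-separator of `G`. -/
theorem bag_is_separator {V : Type} [Fintype V] (G : SimpleGraph V)
    (D : LenientTD G) (t : D.ι) (x y : V) (hxy : x ≠ y)
    (hxt : x ∉ D.χ t) (hyt : y ∉ D.χ t)
    (hsep : ∀ (s s' : D.ι) (hs : s ∈ ({t}ᶜ : Set D.ι)) (hs' : s' ∈ ({t}ᶜ : Set D.ι)),
      x ∈ D.χ s → y ∈ D.χ s' →
      ¬ (D.T.induce ({t}ᶜ : Set D.ι)).Reachable ⟨s, hs⟩ ⟨s', hs'⟩) :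
    SepPair G x y (D.χ t) := 
  by
    refine ⟨hxt, hyt, ?_⟩
    intro hx hy hr
    obtain ⟨w⟩ := hr
    -- show: for any walk in G - χ t, endpoints' traces are connected in T - t
    have main : ∀ (a b : {v // v ∈ (D.χ t)ᶜ}) (w : (G.induce ((D.χ t)ᶜ : Set V)).Walk a b)
        (s s' : D.ι) (hsa : a.1 ∈ D.χ s) (hsb : b.1 ∈ D.χ s'),
        (D.T.induce ({t}ᶜ : Set D.ι)).Reachable
          ⟨s, fun h => a.2 (h ▸ hsa)⟩ ⟨s', fun h => b.2 (h ▸ hsb)⟩ := by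
      intro a b w
      induction w with
      | @nil a1 => intro s s' hsa hsb; exact trace_reach D t (by exact a1.2) hsa hsb
      | @cons a2 c b2 h p ih =>
        intro s s' hsa hsb
        obtain ⟨sc, hsc⟩ := D.covers c.1
        exact (edge_reach D t (by exact a2.2) (by exact c.2) h hsa hsc).trans
          (ih sc s' hsc hsb)
    obtain ⟨sx, hsx⟩ := D.covers x
    obtain ⟨sy, hsy⟩ := D.covers y
    exact hsep sx sy (fun h => hxt (h ▸ hsx)) (fun h => hyt (h ▸ hsy)) hsx hsy
      (main ⟨x, hx⟩ ⟨y, hy⟩ w sx sy hsx hsy)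
end

section
/- Let G and G′ be disjoint graphs each having a lenient tree decomposition of width at most k, and let G″ be obtained from their disjoint union by identifying a vertex x of G with a vertex y of G′. Then G″ has a lenient tree decomposition of width at most k. -/
open SimpleGraph

/-- The graph obtained from the disjoint union of `G` and `G'` by identifying
the vertex `x` of `G` with the vertex `y` of `G'`. -/
def glue {V V' : Type} (G : SimpleGraph V) (G' : SimpleGraph V') (x : V)
    (y : V') : SimpleGraph (V ⊕ {v : V' // v ≠ y}) :=
  SimpleGraph.fromRel (fun a b =>
    match a, b with
    | Sum.inl u, Sum.inl v => G.Adj u v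
    | Sum.inr u, Sum.inr v => G'.Adj u.1 v.1
    | Sum.inl u, Sum.inr v => u = x ∧ G'.Adj y v.1
    | Sum.inr _, Sum.inl _ => False)

namespace JoinTree

open Sum SimpleGraph Walk

variable {ι ι' : Type} (T : SimpleGraph ι) (T' : SimpleGraph ι') (t₀ : ι) (t₀' : ι')

/-- Join two graphs by an edge between `t₀` and `t₀'`. -/
def J : SimpleGraph (ι ⊕ ι') where
  Adj a b := match a, b with
    | inl a, inl b => T.Adj a b
    | inr a, inr b => T'.Adj a b
    | inl a, inr b => a = t₀ ∧ b = t₀'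
    | inr a, inl b => a = t₀' ∧ b = t₀
  symm := by
    constructor
    rintro (a | a) (b | b) h
    · exact h.symm
    · exact ⟨h.2, h.1⟩
    · exact ⟨h.2, h.1⟩
    · exact h.symm
  loopless := by
    constructor
    rintro (a | a) h
    · exact T.loopless.irrefl _ h
    · exact T'.loopless.irrefl _ h

@[simp] lemma J_adj_inl_inl {a b : ι} : (J T T' t₀ t₀').Adj (inl a) (inl b) ↔ T.Adj a b :=
  Iff.rfl

@[simp] lemma J_adj_inr_inr {a b : ι'} : (J T T' t₀ t₀').Adj (inr a) (inr b) ↔ T'.Adj a b :=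
  Iff.rfl

@[simp] lemma J_adj_inl_inr {a : ι} {b : ι'} :
    (J T T' t₀ t₀').Adj (inl a) (inr b) ↔ a = t₀ ∧ b = t₀' := Iff.rfl

@[simp] lemma J_adj_inr_inl {a : ι'} {b : ι} :
    (J T T' t₀ t₀').Adj (inr a) (inl b) ↔ a = t₀' ∧ b = t₀ := Iff.rfl

/-- The left inclusion homomorphism. -/
def homInl : T →g (J T T' t₀ t₀') := ⟨inl, fun h => h⟩

/-- The right inclusion homomorphism. -/
def homInr : T' →g (J T T' t₀ t₀') := ⟨inr, fun h => h⟩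

variable {T T' t₀ t₀'}

lemma cross_lr : ∀ {u v : ι ⊕ ι'} (w : (J T T' t₀ t₀').Walk u v), u.isLeft → v.isRight →
    s(inl t₀, (inr t₀' : ι ⊕ ι')) ∈ w.edges := by
  intro u v w
  induction w with
  | nil =>
    intro h1 h2
    rw [Sum.isLeft_iff] at h1
    obtain ⟨a, rfl⟩ := h1
    simp at h2
  | @cons u m v h p ih =>
    intro h1 h2
    match m with
    | inl m' =>
      rw [Walk.edges_cons]
      exact List.mem_cons_of_mem _ (ih rfl h2)
    | inr m' =>
      match u with
      | inl a =>
        obtain ⟨rfl, rfl⟩ := h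
        exact List.mem_cons_self
      | inr a => simp at h1

lemma cross_rl {u v : ι ⊕ ι'} (w : (J T T' t₀ t₀').Walk u v) (h1 : u.isRight)
    (h2 : v.isLeft) : s(inl t₀, (inr t₀' : ι ⊕ ι')) ∈ w.edges := by
  have := cross_lr w.reverse h2 h1
  rwa [Walk.edges_reverse, List.mem_reverse] at this

lemma down_left : ∀ {u v : ι ⊕ ι'} (w : (J T T' t₀ t₀').Walk u v)
    (_ : ∀ s ∈ w.support, s.isLeft) (a b : ι) (h1 : u = inl a) (h2 : v = inl b),
    ∃ w' : T.Walk a b, w'.map (homInl T T' t₀ t₀') = w.copy h1 h2 := by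
  intro u v w
  induction w with
  | nil =>
    intro _ a b h1 h2
    subst h1
    obtain rfl : a = b := inl.inj h2
    exact ⟨Walk.nil, by simp; rfl⟩
  | @cons u m v h p ih =>
    intro hs a b h1 h2
    subst h1; subst h2
    obtain ⟨a', rfl⟩ : ∃ a', m = inl a' := by
      have := hs m (by simp)
      cases m
      · exact ⟨_, rfl⟩
      · simp at this
    obtain ⟨w', hw'⟩ := ih (fun s hsup => hs s (by simp [hsup])) a' b rfl rfl
    rw [Walk.copy_rfl_rfl] at hw' ⊢
    exact ⟨Walk.cons h w', by subst hw'; rfl⟩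

lemma down_right : ∀ {u v : ι ⊕ ι'} (w : (J T T' t₀ t₀').Walk u v)
    (_ : ∀ s ∈ w.support, s.isRight) (a b : ι') (h1 : u = inr a) (h2 : v = inr b),
    ∃ w' : T'.Walk a b, w'.map (homInr T T' t₀ t₀') = w.copy h1 h2 := by
  intro u v w
  induction w with
  | nil =>
    intro _ a b h1 h2
    subst h1
    obtain rfl : a = b := inr.inj h2
    exact ⟨Walk.nil, by simp; rfl⟩
  | @cons u m v h p ih =>
    intro hs a b h1 h2
    subst h1; subst h2
    obtain ⟨a', rfl⟩ : ∃ a', m = inr a' := by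
      have := hs m (by simp)
      cases m
      · simp at this
      · exact ⟨_, rfl⟩
    obtain ⟨w', hw'⟩ := ih (fun s hsup => hs s (by simp [hsup])) a' b rfl rfl
    rw [Walk.copy_rfl_rfl] at hw' ⊢
    exact ⟨Walk.cons h w', by subst hw'; rfl⟩

lemma no_mixed_cycle {v : ι ⊕ ι'} (c : (J T T' t₀ t₀').Walk v v) (hc : c.IsCycle)
    (u : ι ⊕ ι') (hu : u ∈ c.support) (hne : u.isLeft ≠ v.isLeft) : False := by
  classical
  have hnd : c.edges.Nodup := hc.edges_nodup
  rw [← Walk.take_spec c hu, Walk.edges_append, List.nodup_append] at hnd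
  rcases v with b | b
  · have hur : u.isRight := by cases u <;> simp_all
    exact hnd.2.2 _ (cross_lr _ rfl hur) _ (cross_rl _ hur rfl) rfl
  · have hul : u.isLeft := by cases u <;> simp_all
    exact hnd.2.2 _ (cross_rl _ rfl hul) _ (cross_lr _ hul rfl) rfl

lemma isTree (hT : T.IsTree) (hT' : T'.IsTree) : (J T T' t₀ t₀').IsTree := by
  constructor
  · rw [connected_iff_exists_forall_reachable]
    refine ⟨inl t₀, ?_⟩
    rintro (a | a)
    · exact (Reachable.map (homInl T T' t₀ t₀')
        (hT.isConnected.preconnected t₀ a))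
    · refine (Adj.reachable (show (J T T' t₀ t₀').Adj (inl t₀) (inr t₀') from
        ⟨rfl, rfl⟩)).trans ?_
      exact Reachable.map (homInr T T' t₀ t₀') (hT'.isConnected.preconnected t₀' a)
  · rintro (a | a) c hc
    · by_cases hR : ∃ s ∈ c.support, s.isRight
      · obtain ⟨u, hu, hur⟩ := hR
        exact no_mixed_cycle c hc u hu (by cases u <;> simp_all)
      · push_neg at hR
        have hall : ∀ s ∈ c.support, s.isLeft := fun s hs => by
          have := hR s hs; cases s <;> simp_all
        obtain ⟨w', hw'⟩ := down_left c hall a a rfl rfl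
        rw [Walk.copy_rfl_rfl] at hw'
        rw [← hw'] at hc
        exact hT.IsAcyclic w'
          ((Walk.map_isCycle_iff_of_injective (f := homInl T T' t₀ t₀')
            Sum.inl_injective).mp hc)
    · by_cases hL : ∃ s ∈ c.support, s.isLeft
      · obtain ⟨u, hu, hul⟩ := hL
        exact no_mixed_cycle c hc u hu (by cases u <;> simp_all)
      · push_neg at hL
        have hall : ∀ s ∈ c.support, s.isRight := fun s hs => by
          have := hL s hs; cases s <;> simp_all
        obtain ⟨w', hw'⟩ := down_right c hall a a rfl rfl
        rw [Walk.copy_rfl_rfl] at hw'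
        rw [← hw'] at hc
        exact hT'.IsAcyclic w'
          ((Walk.map_isCycle_iff_of_injective (f := homInr T T' t₀ t₀')
            Sum.inr_injective).mp hc)

end JoinTree

/-- identifying one vertex of `G` with one vertex of `G'`
preserves having a lenient tree decomposition of width at most `k`. -/
theorem glue_lenientTD {V V' : Type} [Fintype V] [Fintype V']
    (G : SimpleGraph V) (G' : SimpleGraph V') (x : V) (y : V') (k : ℕ)
    (hG : ∃ D : LenientTD G, D.WidthLE k)
    (hG' : ∃ D : LenientTD G', D.WidthLE k) :
    ∃ D : LenientTD (glue G G' x y), D.WidthLE k := by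
  classical
  obtain ⟨D, hD⟩ := hG
  obtain ⟨D', hD'⟩ := hG'
  obtain ⟨t₀, ht₀⟩ := D.covers x
  obtain ⟨t₀', ht₀'⟩ := D'.covers y
  set g : V' → V ⊕ {v : V' // v ≠ y} :=
    fun v => if h : v = y then Sum.inl x else Sum.inr ⟨v, h⟩ with hgdef
  have hgy : g y = Sum.inl x := by simp [hgdef]
  have hgne : ∀ (v : V') (h : v ≠ y), g v = Sum.inr ⟨v, h⟩ := fun v h => by
    simp [hgdef, h]
  have hginj : Function.Injective g := by
    intro a b hab
    by_cases ha : a = y <;> by_cases hb : b = y <;>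
      simp only [hgdef, dif_pos, dif_neg, ha, hb] at hab <;> simp_all
  set χ : D.ι ⊕ D'.ι → Set (V ⊕ {v : V' // v ≠ y}) :=
    Sum.elim (fun t => Sum.inl '' D.χ t) (fun t => g '' D'.χ t) with hχdef
  have meml : ∀ (u : V) (t : D.ι), Sum.inl u ∈ χ (Sum.inl t) ↔ u ∈ D.χ t := by
    intro u t
    simp [hχdef, Sum.inl_injective.mem_set_image]
  have memr : ∀ (u : V') (hu : u ≠ y) (t : D'.ι),
      Sum.inr ⟨u, hu⟩ ∈ χ (Sum.inr t) ↔ u ∈ D'.χ t := by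
    intro u hu t
    constructor
    · rintro ⟨v, hv, e⟩
      by_cases hvy : v = y
      · rw [hvy, hgy] at e; simp at e
      · rw [hgne v hvy] at e
        obtain rfl : v = u := congrArg (fun s => Sum.elim (fun _ => v) Subtype.val s) e
        exact hv
    · intro h
      exact ⟨u, h, hgne u hu⟩
  have memxr : ∀ t : D'.ι, Sum.inl x ∈ χ (Sum.inr t) ↔ y ∈ D'.χ t := by
    intro t
    constructor
    · rintro ⟨v, hv, e⟩
      by_cases hvy : v = y
      · rwa [hvy] at hv
      · rw [hgne v hvy] at e; simp at e
    · intro h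
      exact ⟨y, h, hgy⟩
  have memrl : ∀ (u : {v : V' // v ≠ y}) (t : D.ι), Sum.inr u ∉ χ (Sum.inl t) := by
    intro u t
    rintro ⟨v, _, e⟩
    simp at e
  have hgmem : ∀ (v : V') (t : D'.ι), v ∈ D'.χ t → g v ∈ χ (Sum.inr t) :=
    fun v t hv => Set.mem_image_of_mem g hv
  have hinr_eq : ∀ u : {v : V' // v ≠ y}, g u.1 = Sum.inr u := fun u => hgne u.1 u.2
  refine ⟨⟨D.ι ⊕ D'.ι, JoinTree.J D.T D'.T t₀ t₀',
    JoinTree.isTree D.tree D'.tree, χ, ?_, ?_, ?_⟩, ?_⟩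
  · -- covers
    rintro (v | ⟨v, hv⟩)
    · obtain ⟨t, ht⟩ := D.covers v
      exact ⟨Sum.inl t, Set.mem_image_of_mem _ ht⟩
    · obtain ⟨t, ht⟩ := D'.covers v
      exact ⟨Sum.inr t, ⟨v, ht, hgne v hv⟩⟩
  · -- edge_mem
    rintro (u | u) (v | v) huv <;> simp only [glue, SimpleGraph.fromRel_adj] at huv
    · have hadj : G.Adj u v := by
        rcases huv.2 with h | h
        · exact h
        · exact h.symm
      obtain ⟨t, t', hc, hu, hv⟩ := D.edge_mem u v hadj
      refine ⟨Sum.inl t, Sum.inl t', ?_, ?_, ?_⟩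
      · rcases hc with rfl | h
        · exact Or.inl rfl
        · exact Or.inr h
      · rcases hu with h | h
        · exact Or.inl (Set.mem_image_of_mem _ h)
        · exact Or.inr (Set.mem_image_of_mem _ h)
      · rcases hv with h | h
        · exact Or.inl (Set.mem_image_of_mem _ h)
        · exact Or.inr (Set.mem_image_of_mem _ h)
    · obtain ⟨rfl, hyv⟩ : u = x ∧ G'.Adj y v.1 := by
        rcases huv.2 with h | h
        · exact h
        · exact absurd h not_false
      obtain ⟨t, t', hc, hy, hv⟩ := D'.edge_mem y v.1 hyv
      refine ⟨Sum.inr t, Sum.inr t', ?_, ?_, ?_⟩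
      · rcases hc with rfl | h
        · exact Or.inl rfl
        · exact Or.inr h
      · rcases hy with h | h
        · exact Or.inl (hgy ▸ hgmem y t h)
        · exact Or.inr (hgy ▸ hgmem y t' h)
      · rcases hv with h | h
        · exact Or.inl (hinr_eq v ▸ hgmem v.1 t h)
        · exact Or.inr (hinr_eq v ▸ hgmem v.1 t' h)
    · obtain ⟨rfl, hyu⟩ : v = x ∧ G'.Adj y u.1 := by
        rcases huv.2 with h | h
        · exact absurd h not_false
        · exact h
      obtain ⟨t, t', hc, hy, hu⟩ := D'.edge_mem y u.1 hyu
      refine ⟨Sum.inr t, Sum.inr t', ?_, ?_, ?_⟩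
      · rcases hc with rfl | h
        · exact Or.inl rfl
        · exact Or.inr h
      · rcases hu with h | h
        · exact Or.inl (hinr_eq u ▸ hgmem u.1 t h)
        · exact Or.inr (hinr_eq u ▸ hgmem u.1 t' h)
      · rcases hy with h | h
        · exact Or.inl (hgy ▸ hgmem y t h)
        · exact Or.inr (hgy ▸ hgmem y t' h)
    · have hadj : G'.Adj u.1 v.1 := by
        rcases huv.2 with h | h
        · exact h
        · exact h.symm
      obtain ⟨t, t', hc, hu, hv⟩ := D'.edge_mem u.1 v.1 hadj
      refine ⟨Sum.inr t, Sum.inr t', ?_, ?_, ?_⟩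
      · rcases hc with rfl | h
        · exact Or.inl rfl
        · exact Or.inr h
      · rcases hu with h | h
        · exact Or.inl (hinr_eq u ▸ hgmem u.1 t h)
        · exact Or.inr (hinr_eq u ▸ hgmem u.1 t' h)
      · rcases hv with h | h
        · exact Or.inl (hinr_eq v ▸ hgmem v.1 t h)
        · exact Or.inr (hinr_eq v ▸ hgmem v.1 t' h)
  · -- trace_conn
    rintro (u | ⟨u, hu⟩)
    · by_cases hux : u = x
      · subst hux
        rw [SimpleGraph.connected_iff_exists_forall_reachable]
        refine ⟨⟨Sum.inl t₀, (meml u t₀).mpr ht₀⟩, ?_⟩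
        rintro ⟨s, hs⟩
        let fA : (D.T.induce {t | u ∈ D.χ t}) →g
            ((JoinTree.J D.T D'.T t₀ t₀').induce {t | Sum.inl u ∈ χ t}) :=
          ⟨fun a => ⟨Sum.inl a.1, (meml u a.1).mpr a.2⟩, fun h => h⟩
        let fB : (D'.T.induce {t | y ∈ D'.χ t}) →g
            ((JoinTree.J D.T D'.T t₀ t₀').induce {t | Sum.inl u ∈ χ t}) :=
          ⟨fun a => ⟨Sum.inr a.1, (memxr a.1).mpr a.2⟩, fun h => h⟩
        rcases s with t | t
        · have ht : u ∈ D.χ t := (meml u t).mp hs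
          exact SimpleGraph.Reachable.map fA
            ((D.trace_conn u).preconnected ⟨t₀, ht₀⟩ ⟨t, ht⟩)
        · have ht : y ∈ D'.χ t := (memxr t).mp hs
          have hadj : ((JoinTree.J D.T D'.T t₀ t₀').induce
              {t | Sum.inl u ∈ χ t}).Adj ⟨Sum.inl t₀, (meml u t₀).mpr ht₀⟩
              ⟨Sum.inr t₀', (memxr t₀').mpr ht₀'⟩ := ⟨rfl, rfl⟩
          refine SimpleGraph.Reachable.trans hadj.reachable ?_
          exact SimpleGraph.Reachable.map fB
            ((D'.trace_conn y).preconnected ⟨t₀', ht₀'⟩ ⟨t, ht⟩)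
      · let f : (D.T.induce {t | u ∈ D.χ t}) →g
            ((JoinTree.J D.T D'.T t₀ t₀').induce {t | Sum.inl u ∈ χ t}) :=
          ⟨fun a => ⟨Sum.inl a.1, (meml u a.1).mpr a.2⟩, fun h => h⟩
        refine SimpleGraph.Connected.map f ?_ (D.trace_conn u)
        rintro ⟨s, hs⟩
        rcases s with t | t
        · exact ⟨⟨t, (meml u t).mp hs⟩, rfl⟩
        · exfalso
          obtain ⟨v, hv, e⟩ := hs
          by_cases hvy : v = y
          · rw [hvy, hgy] at e
            exact hux (Sum.inl_injective e).symm
          · rw [hgne v hvy] at e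
            simp at e
    · let f : (D'.T.induce {t | u ∈ D'.χ t}) →g
          ((JoinTree.J D.T D'.T t₀ t₀').induce
            {t | Sum.inr ⟨u, hu⟩ ∈ χ t}) :=
        ⟨fun a => ⟨Sum.inr a.1, (memr u hu a.1).mpr a.2⟩, fun h => h⟩
      refine SimpleGraph.Connected.map f ?_ (D'.trace_conn u)
      rintro ⟨s, hs⟩
      rcases s with t | t
      · exact absurd hs (memrl _ t)
      · exact ⟨⟨t, (memr u hu t).mp hs⟩, rfl⟩
  · -- width
    rintro (t | t)
    · show (Sum.inl '' D.χ t).ncard ≤ k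
      rw [Set.ncard_image_of_injective _ Sum.inl_injective]
      exact hD t
    · show (g '' D'.χ t).ncard ≤ k
      rw [Set.ncard_image_of_injective _ hginj]
      exact hD' t
end

section
/- Let G be a graph with a lenient tree decomposition of width at most k in which all bags have size exactly k and no two bags are comparable under inclusion (an 'extreme' decomposition (T,χ)), and let G⁺ be the (T,χ)-completion of G. Then for every pair of nodes t, t′ of T there exist k pairwise vertex-disjoint χ(t)–χ(t′) paths in G⁺. -/
open SimpleGraph

section AuxProofs

open SimpleGraph

/-- In a tree, if a set `S` induces a connected subgraph containing `x` and `y`,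
then every vertex on a path from `x` to `y` lies in `S`. -/
lemma tree_path_support_subset {ι : Type} [DecidableEq ι] {T : SimpleGraph ι}
    (hT : T.IsTree)
    (S : Set ι) (hS : (T.induce S).Connected) {x y : ι} (hx : x ∈ S) (hy : y ∈ S)
    (w : T.Walk x y) (hw : w.IsPath) : ∀ u ∈ w.support, u ∈ S := by
  obtain ⟨q⟩ := hS.preconnected ⟨x, hx⟩ ⟨y, hy⟩
  have hEq : w = (q.map (SimpleGraph.Embedding.induce S).toHom).bypass :=
    (hT.existsUnique_path x y).unique hw (Walk.bypass_isPath _)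
  intro u hu
  rw [hEq] at hu
  have h1 : u ∈ (q.map (SimpleGraph.Embedding.induce S).toHom).support :=
    Walk.support_bypass_subset _ hu
  rw [Walk.support_map] at h1
  obtain ⟨⟨v, hv⟩, _, rfl⟩ := List.mem_map.1 h1
  exact hv

/-- For two finite sets of equal size, there is a map fixing the
intersection and mapping `B \ A` injectively into `A \ B`. -/
lemma exists_shift {V : Type} [Fintype V] (A B : Set V) (h : A.ncard = B.ncard) :
    ∃ g : V → V, (∀ x ∈ A ∩ B, g x = x) ∧ Set.InjOn g B ∧
      (∀ x ∈ B \ A, g x ∈ A \ B) := by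
  classical
  have hcard : (B \ A).ncard = (A \ B).ncard := by
    have h1 := Set.ncard_diff_add_ncard_of_subset (Set.inter_subset_left (s := B) (t := A))
      B.toFinite
    have h2 := Set.ncard_diff_add_ncard_of_subset (Set.inter_subset_left (s := A) (t := B))
      A.toFinite
    rw [Set.diff_self_inter] at h1 h2
    have h3 : (B ∩ A).ncard = (A ∩ B).ncard := by rw [Set.inter_comm]
    omega
  have hcard' : Fintype.card ↥(B \ A) = Fintype.card ↥(A \ B) := by
    rw [← Nat.card_eq_fintype_card, ← Nat.card_eq_fintype_card,
      Nat.card_coe_set_eq, Nat.card_coe_set_eq, hcard]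
  obtain ⟨e⟩ : Nonempty (↥(B \ A) ≃ ↥(A \ B)) := ⟨Fintype.equivOfCardEq hcard'⟩
  refine ⟨fun x => if h : x ∈ B \ A then (e ⟨x, h⟩ : V) else x, ?_, ?_, ?_⟩
  · intro x hx
    have : x ∉ B \ A := fun h' => h'.2 hx.1
    simp only [dif_neg this]
  · intro x hx y hy hxy
    simp only at hxy
    by_cases h1 : x ∈ B \ A <;> by_cases h2 : y ∈ B \ A
    · rw [dif_pos h1, dif_pos h2] at hxy
      exact congrArg Subtype.val (e.injective (Subtype.ext hxy))
    · rw [dif_pos h1, dif_neg h2] at hxy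
      exact absurd (hxy ▸ hy) (e ⟨x, h1⟩).2.2
    · rw [dif_neg h1, dif_pos h2] at hxy
      exact absurd (hxy ▸ hx) (e ⟨y, h2⟩).2.2
    · rwa [dif_neg h1, dif_neg h2] at hxy
  · intro x hx
    simp only [dif_pos hx]
    exact (e ⟨x, hx⟩).2

/-- The key induction: along a tree path from `x` to `y` we can build `k`
disjoint bag-to-bag paths in the completion. -/
lemma key_disjoint_paths {V : Type} [Fintype V] (G : SimpleGraph V) (k : ℕ)
    (D : LenientTD G) (hsize : ∀ t, (D.χ t).ncard = k) :
    ∀ {x y : D.ι} (w : D.T.Walk x y), w.IsPath →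
    ∃ (a b : Fin k → V) (p : ∀ i, (D.completion).Walk (a i) (b i)),
      (∀ i, (p i).IsPath) ∧ (∀ i, a i ∈ D.χ x) ∧ (∀ i, b i ∈ D.χ y) ∧
      (∀ i v, v ∈ (p i).support → ∃ u ∈ w.support, v ∈ D.χ u) ∧
      (∀ i j, i ≠ j → ∀ v, v ∈ (p i).support → v ∉ (p j).support) := by
  classical
  intro x y w
  induction w with
  | nil =>
    rename_i u
    intro _
    haveI := (D.χ u).toFinite.fintype
    have hc : Fintype.card ↥(D.χ u) = k := by
      rw [← Nat.card_eq_fintype_card, Nat.card_coe_set_eq, hsize]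
    let e := Fintype.equivFinOfCardEq hc
    refine ⟨fun i => (e.symm i : V), fun i => (e.symm i : V), fun _ => Walk.nil,
      fun _ => Walk.IsPath.nil, fun i => (e.symm i).2, fun i => (e.symm i).2, ?_, ?_⟩
    · intro i v hv
      rw [Walk.support_nil, List.mem_singleton] at hv
      exact ⟨u, by simp, by rw [hv]; exact (e.symm i).2⟩
    · intro i j hij v hvi hvj
      rw [Walk.support_nil, List.mem_singleton] at hvi hvj
      exact hij (e.symm.injective (Subtype.ext (hvi.symm.trans hvj)))
  | @cons s s' tEnd hadj w ih =>
    intro hw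
    rw [Walk.cons_isPath_iff] at hw
    obtain ⟨hw1, hns⟩ := hw
    obtain ⟨a, b, p, hp, ha, hb, hsup, hdisj⟩ := ih hw1
    obtain ⟨g, hfix, hinj, hmove⟩ := exists_shift (D.χ s) (D.χ s')
      (by rw [hsize, hsize])
    -- a vertex of χ s \ χ s' is in no bag along w
    have F : ∀ x' ∈ D.χ s \ D.χ s', ∀ u ∈ w.support, x' ∉ D.χ u := by
      intro x' hx u hu hxu
      have hq : (w.takeUntil u hu).IsPath := hw1.takeUntil hu
      have hsns : s ∉ (w.takeUntil u hu).support :=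
        fun hs => hns (Walk.support_takeUntil_subset _ hu hs)
      have hQ : (Walk.cons hadj (w.takeUntil u hu)).IsPath := hq.cons hsns
      have hsubtree := tree_path_support_subset D.tree {r | x' ∈ D.χ r}
        (D.trace_conn x') hx.1 hxu _ hQ
      refine hx.2 (hsubtree s' ?_)
      rw [Walk.support_cons]
      exact List.mem_cons_of_mem _ (Walk.start_mem_support _)
    have hga : ∀ i, g (a i) ∈ D.χ s := by
      intro i
      by_cases h : a i ∈ D.χ s
      · rw [hfix (a i) ⟨h, ha i⟩]; exact h
      · exact (hmove (a i) ⟨ha i, h⟩).1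
    have hGnotsup : ∀ i j, a j ∉ D.χ s → g (a j) ∉ (p i).support := by
      intro i j hj hmem
      obtain ⟨u, hu, hv⟩ := hsup i _ hmem
      exact F (g (a j)) (hmove (a j) ⟨ha j, hj⟩) u hu hv
    have hedge : ∀ i, a i ∉ D.χ s → D.completion.Adj (g (a i)) (a i) := by
      intro i hi
      have hm := hmove (a i) ⟨ha i, hi⟩
      exact show _ ∧ _ from ⟨fun hEq => hm.2 (hEq.symm ▸ ha i), s, s', Or.inr hadj,
        Or.inl hm.1, Or.inr (ha i)⟩
    let p' : ∀ i, D.completion.Walk (g (a i)) (b i) := fun i =>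
      if h : a i ∈ D.χ s then (p i).copy (hfix (a i) ⟨h, ha i⟩).symm rfl
      else Walk.cons (hedge i h) (p i)
    have hmem1 : ∀ i v, v ∈ (p' i).support → v = g (a i) ∨ v ∈ (p i).support := by
      intro i v hv
      by_cases h : a i ∈ D.χ s
      · simp only [p', dif_pos h, Walk.support_copy] at hv
        exact Or.inr hv
      · simp only [p', dif_neg h, Walk.support_cons, List.mem_cons] at hv
        exact hv
    have hmem2 : ∀ i v, v ∈ (p i).support → v ∈ (p' i).support := by
      intro i v hv
      by_cases h : a i ∈ D.χ s
      · simp only [p', dif_pos h, Walk.support_copy]; exact hv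
      · simp only [p', dif_neg h, Walk.support_cons, List.mem_cons]; exact Or.inr hv
    have hane : ∀ i j, i ≠ j → a i ≠ a j := by
      intro i j hij hEq
      have hni := hdisj i j hij (a i) (Walk.start_mem_support _)
      rw [hEq] at hni
      exact hni (Walk.start_mem_support _)
    have hgnot : ∀ i j, i ≠ j → g (a i) ∉ (p' j).support := by
      intro i j hij hmem
      rcases hmem1 j _ hmem with hEq | hmem'
      · exact hane i j hij (hinj (ha i) (ha j) hEq)
      · by_cases h : a i ∈ D.χ s
        · rw [hfix (a i) ⟨h, ha i⟩] at hmem'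
          exact hdisj j i hij.symm (a i) hmem' (Walk.start_mem_support _)
        · exact hGnotsup j i h hmem'
    refine ⟨fun i => g (a i), b, p', ?_, fun i => hga i, hb, ?_, ?_⟩
    · intro i
      by_cases h : a i ∈ D.χ s
      · simp only [p', dif_pos h]
        exact (Walk.isPath_copy _ _ _).2 (hp i)
      · simp only [p', dif_neg h]
        exact (hp i).cons (hGnotsup i i h)
    · intro i v hv
      rcases hmem1 i v hv with rfl | hmem'
      · exact ⟨s, by simp, hga i⟩
      · obtain ⟨u, hu, h'⟩ := hsup i v hmem'
        exact ⟨u, by simp [hu], h'⟩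
    · intro i j hij v hvi hvj
      rcases hmem1 i v hvi with rfl | hmem'
      · exact hgnot i j hij hvj
      · rcases hmem1 j v hvj with rfl | hmem''
        · exact hgnot j i hij.symm (hmem2 i _ hmem')
        · exact hdisj i j hij v hmem' hmem''

end AuxProofs

/-- in the completion of an extreme lenient tree decomposition of
width `k`, any two bags are joined by `k` pairwise vertex-disjoint paths. -/
theorem extreme_completion_disjoint_paths {V : Type} [Fintype V]
    (G : SimpleGraph V) (k : ℕ) (D : LenientTD G)
    (hsize : ∀ t, (D.χ t).ncard = k)
    (hinc : ∀ t t', t ≠ t' → ¬ D.χ t ⊆ D.χ t') (t t' : D.ι) :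
    ∃ (a b : Fin k → V) (p : ∀ i, (D.completion).Walk (a i) (b i)),
      (∀ i, (p i).IsPath) ∧ (∀ i, a i ∈ D.χ t) ∧ (∀ i, b i ∈ D.χ t') ∧
      ∀ i j, i ≠ j → ∀ v, v ∈ (p i).support → v ∉ (p j).support := by
  classical
  obtain ⟨w0⟩ := D.tree.isConnected.preconnected t t'
  obtain ⟨a, b, p, hp, ha, hb, _, hdisj⟩ :=
    key_disjoint_paths G k D hsize w0.bypass (SimpleGraph.Walk.bypass_isPath w0)
  exact ⟨a, b, p, hp, ha, hb, hdisj⟩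
end
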